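/- Let L, M, B̄, P, S, γ̄ > 0, 0 < δ < 1, and F₁ > F*. Set α = 2(F₁ − F*)/(S·γ̄), β = L·γ̄·M/(P·B̄), η = L²·γ̄²·M/(6·B̄), and define B(K) = (α + βK + η(2K−1)(K−1))·(K/(K−1+δ)) for integers K ≥ 1. If (1−δ)(F₁ − F*)/(S·γ̄·δ) > (3δ−1)·L·γ̄·M/(2δ·P·B̄) + L²·γ̄²·M/(2·B̄), then B(2) < B(1), and hence every minimizer K* of B over the positive integers satisfies K* ≥ 2. -/

import Mathlib

/-- **The optimal averaging delay is greater than 1 (Theorem 4).**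
With the total number of samples `S = N·K` held constant and
`α = 2(F₁ − F*)/(Sγ̄)`, `β = Lγ̄M/(PB̄)`, `η = L²γ̄²M/(6B̄)`, if
`(1−δ)(F₁ − F*)/(Sγ̄δ) > (3δ−1)Lγ̄M/(2δPB̄) + L²γ̄²M/(2B̄)` then `B(2) < B(1)`,
and hence every minimizer of `B` over the positive integers is at least 2. -/
theorem optimal_delay_greater_than_one
    (L M Bbar P S γ δ F₁ Fstar : ℝ)
    (hL : 0 < L) (hM : 0 < M) (hBbar : 0 < Bbar) (hP : 0 < P) (hS : 0 < S)
    (hγ : 0 < γ) (hδ0 : 0 < δ) (hδ1 : δ < 1) (hF : Fstar < F₁)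
    (α β η : ℝ)
    (hα : α = 2 * (F₁ - Fstar) / (S * γ))
    (hβ : β = L * γ * M / (P * Bbar))
    (hη : η = L ^ 2 * γ ^ 2 * M / (6 * Bbar))
    (Bf : ℕ → ℝ)
    (hBf : ∀ K : ℕ, Bf K = (α + β * (K : ℝ) + η * (2 * (K : ℝ) - 1) * ((K : ℝ) - 1))
        * ((K : ℝ) / ((K : ℝ) - 1 + δ)))
    (hcond : (1 - δ) * (F₁ - Fstar) / (S * γ * δ)
        > (3 * δ - 1) * L * γ * M / (2 * δ * P * Bbar) + L ^ 2 * γ ^ 2 * M / (2 * Bbar)) :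
    Bf 2 < Bf 1 ∧
      ∀ Kstar : ℕ, (1 ≤ Kstar ∧ ∀ K : ℕ, 1 ≤ K → Bf Kstar ≤ Bf K) → 2 ≤ Kstar := by
  have hSγ : 0 < S * γ := mul_pos hS hγ
  have hPB : 0 < P * Bbar := mul_pos hP hBbar
  have h1δ : 0 < 1 + δ := by linarith
  -- key inequality: (1-δ)*α > (3δ-1)*β + 6δη
  have hkey : (1 - δ) * α > (3 * δ - 1) * β + 6 * δ * η := by
    rw [hα, hβ, hη]
    rw [gt_iff_lt, div_add_div _ _ (by positivity : (2 * δ * P * Bbar : ℝ) ≠ 0)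
      (by positivity : (2 * Bbar : ℝ) ≠ 0), div_lt_div_iff₀ (by positivity) (by positivity)] at hcond
    rw [gt_iff_lt, ← sub_pos]
    field_simp
    rw [← sub_pos] at hcond ⊢
    nlinarith [hcond, mul_pos hδ0 hSγ, mul_pos hPB hBbar, mul_pos hSγ hPB, hBbar, mul_pos hδ0 hBbar]
  have h21 : Bf 2 < Bf 1 := by
    rw [hBf 2, hBf 1]
    push_cast
    have e1 : (α + β * 1 + η * (2 * 1 - 1) * (1 - 1)) * (1 / (1 - 1 + δ)) = (α + β) / δ := by
      field_simp; ring
    have e2 : (α + β * 2 + η * (2 * 2 - 1) * (2 - 1)) * (2 / (2 - 1 + δ)) =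
        (α + 2 * β + 3 * η) * 2 / (1 + δ) := by
      field_simp; ring
    rw [e1, e2, div_lt_div_iff₀ h1δ hδ0]
    nlinarith [hkey]
  refine ⟨h21, ?_⟩
  rintro Kstar ⟨h1, hmin⟩
  by_contra h
  interval_cases Kstar
  · exact absurd (hmin 2 (by norm_num)) (not_le.mpr h21)
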